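/- arXiv:1808.06449 — 2 statements merged into one kernel-verified Lean document; each statement's English description precedes it below -/
import Mathlib

section
/- Let ε, δ ∈ (0,1) with 1/√δ an integer, let p_{XY} be a joint distribution over finite sets 𝒳×𝒴, and let R₁, R₂ satisfy R₁ ≥ 3H(X|Y)/ε + log(1/δ), R₂ ≥ 3H(Y|X)/ε + log(1/δ), and R₁+R₂ ≥ 3H(X,Y)/ε + 4 log(1/δ) + log log(max(|𝒳|,|𝒴|)/δ). Then there exist deterministic encoders f_A : 𝒳 → C_A and f_B : 𝒴 → C_B with |C_A| ≤ 2^{⌈R₁+3 log(1/δ)⌉} and |C_B| ≤ 2^{⌈R₂+3 log(1/δ)⌉}, and a decoder g : C_A×C_B → 𝒳×𝒴, using no shared randomness, such that Pr_{(x,y)~p}[ g(f_A(x), f_B(y)) ≠ (x,y) ] ≤ ε+8δ. -/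
open Finset Real
open scoped Classical

noncomputable section

/- ### Auxiliary lemmas -/

lemma card_collide_mul' {α : Type*} [Fintype α] (n : ℕ) {x x' : α} (hxx : x' ≠ x) :
    (Finset.univ.filter (fun f : α → Fin n => f x' = f x)).card * n
      = n ^ Fintype.card α := by
  classical
  have e : {f : α → Fin n // f x' = f x} × Fin n ≃ (α → Fin n) := by
    refine ⟨fun fa => Function.update fa.1.1 x' fa.2,
      fun g => (⟨Function.update g x' (g x), by
        simp [Function.update_of_ne hxx.symm, Function.update_self]⟩, g x'), ?_, ?_⟩
    · rintro ⟨⟨f, hf⟩, a⟩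
      have hx : Function.update f x' a x = f x := Function.update_of_ne (Ne.symm hxx) _ _
      have h1 : Function.update (Function.update f x' a) x' (Function.update f x' a x) = f := by
        rw [hx, Function.update_idem, ← hf, Function.update_eq_self]
      simp only [Prod.mk.injEq, Subtype.mk.injEq]
      exact ⟨h1, Function.update_self _ _ _⟩
    · intro g
      simp [Function.update_idem]
  have := Fintype.card_congr e
  simpa [Fintype.card_subtype, Fintype.card_fun] using this

/-- Collision count over uniformly random functions. -/
lemma sum_collide' {α : Type*} [Fintype α] (n : ℕ) {x x' : α} (hxx : x' ≠ x) :
    (∑ f : α → Fin n, (if f x' = f x then (1:ℝ) else 0)) * n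
      = (Fintype.card (α → Fin n) : ℝ) := by
  rw [Finset.sum_boole]
  have := card_collide_mul' n hxx
  rw [Fintype.card_fun, Fintype.card_fin]
  exact_mod_cast congrArg (Nat.cast : ℕ → ℝ) this

/-- Markov-type bound for information densities. -/
lemma markov_info' {ι : Type*} [Fintype ι] (q w : ι → ℝ) (hq : ∀ i, 0 ≤ q i)
    (hw : ∀ i, 0 < q i → 0 < w i ∧ w i ≤ 1)
    (ε : ℝ) (hε : 0 < ε) :
    ∑ i ∈ Finset.univ.filter (fun i => 0 < q i ∧
        w i < (2:ℝ) ^ (-(3 * (∑ j, q j * (-Real.logb 2 (w j))) / ε))), q i ≤ ε / 3 := by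
  classical
  set H : ℝ := ∑ j, q j * (-logb 2 (w j)) with hH
  set t : ℝ := 3 * H / ε with ht
  have hterm : ∀ i, 0 ≤ q i * (-logb 2 (w i)) := by
    intro i
    rcases le_or_gt (q i) 0 with h | h
    · have : q i = 0 := le_antisymm h (hq i); simp [this]
    · have hwi := hw i h
      have h2 : logb 2 (w i) ≤ 0 := Real.logb_nonpos (by norm_num) (le_of_lt hwi.1) hwi.2
      have : 0 ≤ -logb 2 (w i) := by linarith
      exact mul_nonneg (le_of_lt h) this
  have hH0 : 0 ≤ H := Finset.sum_nonneg fun i _ => hterm i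
  set S := Finset.univ.filter (fun i => 0 < q i ∧ w i < (2:ℝ) ^ (-t)) with hS
  have hkey : ∀ i ∈ S, t ≤ -logb 2 (w i) := by
    intro i hi
    rw [hS, mem_filter] at hi
    obtain ⟨-, hqi, hwi⟩ := hi
    have h1 : logb 2 (w i) < logb 2 ((2:ℝ) ^ (-t)) :=
      Real.logb_lt_logb (by norm_num) (hw i hqi).1 hwi
    rw [Real.logb_rpow (by norm_num) (by norm_num)] at h1
    linarith
  rcases eq_or_lt_of_le hH0 with hH0' | hHpos
  · have hSempty : S = ∅ := by
      rw [eq_empty_iff_forall_notMem]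
      intro i hi
      have hi' := hi
      rw [hS, mem_filter] at hi'
      obtain ⟨-, hqi, hwi⟩ := hi'
      have ht0 : t = 0 := by rw [ht, ← hH0']; ring
      have hw1 : w i < 1 := by
        rw [ht0] at hwi; simpa using hwi
      have hlogneg : logb 2 (w i) < 0 := Real.logb_neg (by norm_num) (hw i hqi).1 hw1
      have hpos : 0 < q i * (-logb 2 (w i)) := mul_pos hqi (by linarith)
      have hle : q i * (-logb 2 (w i)) ≤ H :=
        Finset.single_le_sum (fun j _ => hterm j) (mem_univ i)
      linarith [hH0'.symm ▸ hle]
    rw [hSempty]; simp; linarith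
  · have h1 : t * ∑ i ∈ S, q i ≤ H := by
      calc t * ∑ i ∈ S, q i = ∑ i ∈ S, q i * t := by rw [Finset.mul_sum]; congr 1; ext; ring
        _ ≤ ∑ i ∈ S, q i * (-logb 2 (w i)) :=
            Finset.sum_le_sum fun i hi => mul_le_mul_of_nonneg_left (hkey i hi) (hq i)
        _ ≤ H := Finset.sum_le_sum_of_subset_of_nonneg (Finset.filter_subset _ _)
            (fun i _ _ => hterm i)
    have htpos : 0 < t := by rw [ht]; positivity
    calc ∑ i ∈ S, q i ≤ H / t := (le_div_iff₀' htpos).mpr h1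
      _ = ε / 3 := by rw [ht]; field_simp

lemma sum_neglog_nonneg' {ι : Type*} [Fintype ι] (q w : ι → ℝ) (hq : ∀ i, 0 ≤ q i)
    (hw : ∀ i, 0 < q i → 0 < w i ∧ w i ≤ 1) :
    0 ≤ ∑ i, q i * (-Real.logb 2 (w i)) := by
  refine Finset.sum_nonneg fun i _ => ?_
  rcases le_or_gt (q i) 0 with h | h
  · have : q i = 0 := le_antisymm h (hq i); simp [this]
  · have hwi := hw i h
    have h2 : logb 2 (w i) ≤ 0 := Real.logb_nonpos (by norm_num) (le_of_lt hwi.1) hwi.2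
    exact mul_nonneg (le_of_lt h) (by linarith)

/-- Counting: a finite set on which `w` is pointwise `≥ 2^(-t)` and `∑ w ≤ 1` has
at most `2^t` elements. -/
lemma card_le_rpow' {ι : Type*} [Fintype ι] (S : Finset ι) (w : ι → ℝ)
    (hw : ∀ i, 0 ≤ w i) (h1 : ∑ i, w i ≤ 1) (t : ℝ)
    (hS : ∀ i ∈ S, (2:ℝ) ^ (-t) ≤ w i) : (S.card : ℝ) ≤ (2:ℝ) ^ t := by
  have h2 : (S.card : ℝ) * (2:ℝ) ^ (-t) ≤ 1 := by
    calc (S.card : ℝ) * (2:ℝ) ^ (-t) = ∑ _i ∈ S, (2:ℝ) ^ (-t) := by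
          rw [Finset.sum_const, nsmul_eq_mul]
      _ ≤ ∑ i ∈ S, w i := Finset.sum_le_sum hS
      _ ≤ ∑ i, w i := Finset.sum_le_sum_of_subset_of_nonneg (Finset.subset_univ _)
          (fun i _ _ => hw i)
      _ ≤ 1 := h1
  calc (S.card : ℝ) = (S.card : ℝ) * (2:ℝ)^(-t) * (2:ℝ)^t := by
        rw [mul_assoc, ← Real.rpow_add (by norm_num)]; simp
    _ ≤ 1 * (2:ℝ)^t :=
        mul_le_mul_of_nonneg_right h2 (le_of_lt (Real.rpow_pos_of_pos (by norm_num) _))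
    _ = (2:ℝ)^t := one_mul _


lemma sum_collide_div' {α : Type*} [Fintype α] (n : ℕ) (hn : 0 < n) {x x' : α} (hxx : x' ≠ x) :
    ∑ f : α → Fin n, (if f x' = f x then (1:ℝ) else 0)
      = (Fintype.card (α → Fin n) : ℝ) / n := by
  rw [eq_div_iff (by exact_mod_cast hn.ne' : (n:ℝ) ≠ 0)]
  exact sum_collide' n hxx

lemma ite_one_mul_ite_one' {P Q : Prop} [Decidable P] [Decidable Q] :
    (if P then (1:ℝ) else 0) * (if Q then (1:ℝ) else 0) = if P ∧ Q then 1 else 0 := by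
  by_cases hP : P <;> by_cases hQ : Q <;> simp [hP, hQ]

lemma sum_collide_fst' {𝒳 𝒴 : Type*} [Fintype 𝒳] [Fintype 𝒴] (cA cB : ℕ)
    (hA : 0 < cA) {x x' : 𝒳} (hx : x' ≠ x) :
    ∑ f : (𝒳 → Fin cA) × (𝒴 → Fin cB), (if f.1 x' = f.1 x then (1:ℝ) else 0)
      = (Fintype.card ((𝒳 → Fin cA) × (𝒴 → Fin cB)) : ℝ) / cA := by
  rw [Fintype.sum_prod_type]
  have hc : ∀ fA : 𝒳 → Fin cA, ∑ _fB : 𝒴 → Fin cB, (if fA x' = fA x then (1:ℝ) else 0)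
      = (if fA x' = fA x then (1:ℝ) else 0) * (Fintype.card (𝒴 → Fin cB)) := by
    intro fA
    rw [Finset.sum_const, Finset.card_univ, nsmul_eq_mul, mul_comm]
  rw [Finset.sum_congr rfl (fun fA _ => hc fA), ← Finset.sum_mul,
    sum_collide_div' cA hA hx, Fintype.card_prod]
  push_cast
  ring

lemma sum_collide_snd' {𝒳 𝒴 : Type*} [Fintype 𝒳] [Fintype 𝒴] (cA cB : ℕ)
    (hB : 0 < cB) {y y' : 𝒴} (hy : y' ≠ y) :
    ∑ f : (𝒳 → Fin cA) × (𝒴 → Fin cB), (if f.2 y' = f.2 y then (1:ℝ) else 0)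
      = (Fintype.card ((𝒳 → Fin cA) × (𝒴 → Fin cB)) : ℝ) / cB := by
  rw [Fintype.sum_prod_type]
  rw [Finset.sum_congr rfl (fun (fA : 𝒳 → Fin cA) _ => sum_collide_div' cB hB hy),
    Finset.sum_const, Finset.card_univ, nsmul_eq_mul, Fintype.card_prod]
  push_cast
  ring

lemma sum_collide_pair' {𝒳 𝒴 : Type*} [Fintype 𝒳] [Fintype 𝒴] (cA cB : ℕ)
    (hA : 0 < cA) (hB : 0 < cB) {x x' : 𝒳} {y y' : 𝒴} (hx : x' ≠ x) (hy : y' ≠ y) :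
    ∑ f : (𝒳 → Fin cA) × (𝒴 → Fin cB),
        (if f.1 x' = f.1 x ∧ f.2 y' = f.2 y then (1:ℝ) else 0)
      = (Fintype.card ((𝒳 → Fin cA) × (𝒴 → Fin cB)) : ℝ) / (cA * cB) := by
  have h1 : ∑ f : (𝒳 → Fin cA) × (𝒴 → Fin cB),
      (if f.1 x' = f.1 x ∧ f.2 y' = f.2 y then (1:ℝ) else 0)
      = (∑ fA : 𝒳 → Fin cA, (if fA x' = fA x then (1:ℝ) else 0)) *
        (∑ fB : 𝒴 → Fin cB, (if fB y' = fB y then (1:ℝ) else 0)) := by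
    rw [Finset.sum_mul_sum, Fintype.sum_prod_type]
    refine Finset.sum_congr rfl fun fA _ => Finset.sum_congr rfl fun fB _ => ?_
    rw [ite_one_mul_ite_one']
  rw [h1, sum_collide_div' cA hA hx, sum_collide_div' cB hB hy, Fintype.card_prod]
  push_cast
  field_simp

variable {𝒳 𝒴 : Type*} [Fintype 𝒳] [Fintype 𝒴]


/-- Marginal on `X` of a joint distribution on `𝒳 × 𝒴`. -/
def margX2 (p : 𝒳 → 𝒴 → ℝ) (x : 𝒳) : ℝ := ∑ y, p x y

/-- Marginal on `Y`. -/
def margY2 (p : 𝒳 → 𝒴 → ℝ) (y : 𝒴) : ℝ := ∑ x, p x y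

/-- Conditional `p_{X|Y=y}(x)`. -/
def condXY2 (p : 𝒳 → 𝒴 → ℝ) (x : 𝒳) (y : 𝒴) : ℝ := p x y / margY2 p y

/-- Conditional `p_{Y|X=x}(y)`. -/
def condYX2 (p : 𝒳 → 𝒴 → ℝ) (y : 𝒴) (x : 𝒳) : ℝ := p x y / margX2 p x

/-- Conditional entropy `H(X|Y)` (base-2 logarithms). -/
def condEntXY (p : 𝒳 → 𝒴 → ℝ) : ℝ := -∑ x, ∑ y, p x y * logb 2 (condXY2 p x y)

/-- Conditional entropy `H(Y|X)`. -/
def condEntYX (p : 𝒳 → 𝒴 → ℝ) : ℝ := -∑ x, ∑ y, p x y * logb 2 (condYX2 p y x)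

/-- Joint entropy `H(X,Y)`. -/
def entXY (p : 𝒳 → 𝒴 → ℝ) : ℝ := -∑ x, ∑ y, p x y * logb 2 (p x y)

set_option maxHeartbeats 4000000 in
/-- Corollary 5.5, one-shot distributed source coding in terms of
conditional entropies: if `R₁ ≥ 3H(X|Y)/ε + log(1/δ)`, `R₂ ≥ 3H(Y|X)/ε + log(1/δ)`
and `R₁+R₂ ≥ 3H(X,Y)/ε + 4 log(1/δ) + log log(max(|𝒳|,|𝒴|)/δ)`, then there is a
deterministic Slepian–Wolf protocol, with no shared randomness, with message sets of
sizes `2^⌈R₁+3 log(1/δ)⌉` and `2^⌈R₂+3 log(1/δ)⌉`, and decoding error at most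
`ε + 8δ`. -/
theorem one_shot_distributed_source_coding_entropy
    (p : 𝒳 → 𝒴 → ℝ) (hp0 : ∀ x y, 0 ≤ p x y) (hp1 : (∑ x, ∑ y, p x y) = 1)
    (ε δ : ℝ) (hε : ε ∈ Set.Ioo (0:ℝ) 1) (hδ : δ ∈ Set.Ioo (0:ℝ) 1)
    (hδint : ∃ j : ℕ, (j : ℝ) = 1 / Real.sqrt δ)
    (R₁ R₂ : ℝ)
    (hR₁ : 3 * condEntXY p / ε + logb 2 (1 / δ) ≤ R₁)
    (hR₂ : 3 * condEntYX p / ε + logb 2 (1 / δ) ≤ R₂)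
    (hR₁₂ : 3 * entXY p / ε + 4 * logb 2 (1 / δ) +
      logb 2 (logb 2 ((max (Fintype.card 𝒳) (Fintype.card 𝒴) : ℝ) / δ)) ≤ R₁ + R₂) :
    ∃ (cA cB : ℕ) (fA : 𝒳 → Fin cA) (fB : 𝒴 → Fin cB) (g : Fin cA → Fin cB → 𝒳 × 𝒴),
      ((cA : ℝ) ≤ (2 : ℝ) ^ (⌈R₁ + 3 * logb 2 (1 / δ)⌉ : ℤ)) ∧
      ((cB : ℝ) ≤ (2 : ℝ) ^ (⌈R₂ + 3 * logb 2 (1 / δ)⌉ : ℤ)) ∧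
      (∑ x, ∑ y, (if g (fA x) (fB y) ≠ (x, y) then p x y else 0)) ≤ ε + 8 * δ := by
  obtain ⟨hε0, hε1⟩ := hε
  obtain ⟨hδ0, hδ1⟩ := hδ
  -- basic facts
  have hX : Nonempty 𝒳 := by
    by_contra h
    rw [not_nonempty_iff] at h
    simp [Finset.sum_empty] at hp1
  have hY : Nonempty 𝒴 := by
    by_contra h
    rw [not_nonempty_iff] at h
    simp at hp1
  haveI := hX; haveI := hY
  -- the weight functions on pairs
  set q : 𝒳 × 𝒴 → ℝ := fun z => p z.1 z.2 with hqdef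
  have hq : ∀ z, 0 ≤ q z := fun z => hp0 z.1 z.2
  have hq1 : ∑ z : 𝒳 × 𝒴, q z = 1 := by
    rw [Fintype.sum_prod_type]; exact hp1
  set wA : 𝒳 × 𝒴 → ℝ := fun z => condXY2 p z.1 z.2 with hwAdef
  set wB : 𝒳 × 𝒴 → ℝ := fun z => condYX2 p z.2 z.1 with hwBdef
  have hwA : ∀ z, 0 < q z → 0 < wA z ∧ wA z ≤ 1 := by
    intro z hz
    have hm : p z.1 z.2 ≤ margY2 p z.2 :=
      Finset.single_le_sum (fun x _ => hp0 x z.2) (Finset.mem_univ z.1)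
    have hz' : 0 < p z.1 z.2 := hz
    have hm0 : 0 < margY2 p z.2 := lt_of_lt_of_le hz' hm
    constructor
    · exact div_pos hz' hm0
    · exact div_le_one_of_le₀ hm (le_of_lt hm0)
  have hwB : ∀ z, 0 < q z → 0 < wB z ∧ wB z ≤ 1 := by
    intro z hz
    have hm : p z.1 z.2 ≤ margX2 p z.1 :=
      Finset.single_le_sum (fun y _ => hp0 z.1 y) (Finset.mem_univ z.2)
    have hz' : 0 < p z.1 z.2 := hz
    have hm0 : 0 < margX2 p z.1 := lt_of_lt_of_le hz' hm
    constructor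
    · exact div_pos hz' hm0
    · exact div_le_one_of_le₀ hm (le_of_lt hm0)
  have hwJ : ∀ z, 0 < q z → 0 < q z ∧ q z ≤ 1 := by
    intro z hz
    refine ⟨hz, ?_⟩
    rw [← hq1]
    exact Finset.single_le_sum (fun z' _ => hq z') (Finset.mem_univ z)
  -- entropies as sums over pairs
  have hHA : condEntXY p = ∑ z : 𝒳 × 𝒴, q z * (-logb 2 (wA z)) := by
    rw [condEntXY, Fintype.sum_prod_type]
    rw [← Finset.sum_neg_distrib]
    refine Finset.sum_congr rfl fun x _ => ?_
    rw [← Finset.sum_neg_distrib]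
    refine Finset.sum_congr rfl fun y _ => ?_
    ring
  have hHB : condEntYX p = ∑ z : 𝒳 × 𝒴, q z * (-logb 2 (wB z)) := by
    rw [condEntYX, Fintype.sum_prod_type]
    rw [← Finset.sum_neg_distrib]
    refine Finset.sum_congr rfl fun x _ => ?_
    rw [← Finset.sum_neg_distrib]
    refine Finset.sum_congr rfl fun y _ => ?_
    ring
  have hHJ : entXY p = ∑ z : 𝒳 × 𝒴, q z * (-logb 2 (q z)) := by
    rw [entXY, Fintype.sum_prod_type]
    rw [← Finset.sum_neg_distrib]
    refine Finset.sum_congr rfl fun x _ => ?_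
    rw [← Finset.sum_neg_distrib]
    refine Finset.sum_congr rfl fun y _ => ?_
    ring
  set L : ℝ := logb 2 (1 / δ) with hLdef
  have h2L : (2:ℝ) ^ L = 1 / δ := Real.rpow_logb (by norm_num) (by norm_num) (by positivity)
  have hL0 : 0 < L := Real.logb_pos (by norm_num) (by rw [lt_div_iff₀ hδ0]; linarith)
  have hδ4 : δ ≤ 1 / 4 := by
    obtain ⟨j, hj⟩ := hδint
    have hs0 : 0 < Real.sqrt δ := Real.sqrt_pos.mpr hδ0
    have hsq : Real.sqrt δ * Real.sqrt δ = δ := Real.mul_self_sqrt (le_of_lt hδ0)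
    have hs1 : Real.sqrt δ < 1 := by nlinarith
    have hj1 : (1:ℝ) < j := by
      rw [hj, lt_div_iff₀ hs0]; linarith
    have hj2 : 2 ≤ j := by
      have : 1 < j := by exact_mod_cast hj1
      omega
    have hj2' : (2:ℝ) ≤ j := by exact_mod_cast hj2
    have h2s : 2 * Real.sqrt δ ≤ 1 := by
      have h := le_trans hj2' (le_of_eq hj)
      rw [le_div_iff₀ hs0] at h
      linarith
    nlinarith
  -- thresholds
  set tA : ℝ := 3 * condEntXY p / ε with htAdef
  set tB : ℝ := 3 * condEntYX p / ε with htBdef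
  set tJ : ℝ := 3 * entXY p / ε with htJdef
  have htA0 : 0 ≤ tA := by
    rw [htAdef, hHA]
    have := sum_neglog_nonneg' q wA hq hwA
    positivity
  have htB0 : 0 ≤ tB := by
    rw [htBdef, hHB]
    have := sum_neglog_nonneg' q wB hq hwB
    positivity
  have htJ0 : 0 ≤ tJ := by
    rw [htJdef, hHJ]
    have := sum_neglog_nonneg' q q hq hwJ
    positivity
  -- message set sizes
  set nA : ℕ := (⌈R₁ + 3 * L⌉).toNat with hnAdef
  set nB : ℕ := (⌈R₂ + 3 * L⌉).toNat with hnBdef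
  set cA : ℕ := 2 ^ nA with hcAdef
  set cB : ℕ := 2 ^ nB with hcBdef
  have hcA0 : 0 < cA := Nat.pow_pos (by norm_num)
  have hcB0 : 0 < cB := Nat.pow_pos (by norm_num)
  have hceilA : 0 ≤ ⌈R₁ + 3 * L⌉ := Int.ceil_nonneg (by linarith)
  have hceilB : 0 ≤ ⌈R₂ + 3 * L⌉ := Int.ceil_nonneg (by linarith)
  have hcAbound : (cA : ℝ) = (2:ℝ) ^ (⌈R₁ + 3 * L⌉ : ℤ) := by
    rw [hcAdef, show (⌈R₁ + 3 * L⌉ : ℤ) = ((nA : ℕ) : ℤ) from (Int.toNat_of_nonneg hceilA).symm,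
      zpow_natCast]
    push_cast
    ring
  have hcBbound : (cB : ℝ) = (2:ℝ) ^ (⌈R₂ + 3 * L⌉ : ℤ) := by
    rw [hcBdef, show (⌈R₂ + 3 * L⌉ : ℤ) = ((nB : ℕ) : ℤ) from (Int.toNat_of_nonneg hceilB).symm,
      zpow_natCast]
    push_cast
    ring
  have hcAge : (2:ℝ) ^ (R₁ + 3 * L) ≤ (cA : ℝ) := by
    have h1 : R₁ + 3 * L ≤ ((nA : ℕ) : ℝ) := by
      have h2 : ((⌈R₁ + 3 * L⌉ : ℤ) : ℝ) ≤ ((nA : ℕ) : ℝ) := by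
        exact_mod_cast Int.self_le_toNat _
      linarith [Int.le_ceil (R₁ + 3 * L)]
    calc (2:ℝ) ^ (R₁ + 3 * L) ≤ (2:ℝ) ^ ((nA : ℕ) : ℝ) :=
          Real.rpow_le_rpow_of_exponent_le (by norm_num) h1
      _ = (cA : ℝ) := by rw [Real.rpow_natCast, hcAdef]; push_cast; ring
  have hcBge : (2:ℝ) ^ (R₂ + 3 * L) ≤ (cB : ℝ) := by
    have h1 : R₂ + 3 * L ≤ ((nB : ℕ) : ℝ) := by
      have h2 : ((⌈R₂ + 3 * L⌉ : ℤ) : ℝ) ≤ ((nB : ℕ) : ℝ) := by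
        exact_mod_cast Int.self_le_toNat _
      linarith [Int.le_ceil (R₂ + 3 * L)]
    calc (2:ℝ) ^ (R₂ + 3 * L) ≤ (2:ℝ) ^ ((nB : ℕ) : ℝ) :=
          Real.rpow_le_rpow_of_exponent_le (by norm_num) h1
      _ = (cB : ℝ) := by rw [Real.rpow_natCast, hcBdef]; push_cast; ring
  -- rate conditions
  have hrA : (2:ℝ) ^ tA ≤ δ * cA := by
    have key : (2:ℝ) ^ tA * (1 / δ) ≤ (cA : ℝ) := by
      calc (2:ℝ) ^ tA * (1 / δ) = (2:ℝ) ^ (tA + L) := by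
            rw [Real.rpow_add (by norm_num : (0:ℝ) < 2), h2L]
        _ ≤ (2:ℝ) ^ (R₁ + 3 * L) :=
            Real.rpow_le_rpow_of_exponent_le (by norm_num) (by linarith)
        _ ≤ (cA : ℝ) := hcAge
    have h2 := mul_le_mul_of_nonneg_right key (le_of_lt hδ0)
    calc (2:ℝ) ^ tA = ((2:ℝ) ^ tA * (1 / δ)) * δ := by field_simp
      _ ≤ (cA : ℝ) * δ := h2
      _ = δ * cA := mul_comm _ _
  have hrB : (2:ℝ) ^ tB ≤ δ * cB := by
    have key : (2:ℝ) ^ tB * (1 / δ) ≤ (cB : ℝ) := by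
      calc (2:ℝ) ^ tB * (1 / δ) = (2:ℝ) ^ (tB + L) := by
            rw [Real.rpow_add (by norm_num : (0:ℝ) < 2), h2L]
        _ ≤ (2:ℝ) ^ (R₂ + 3 * L) :=
            Real.rpow_le_rpow_of_exponent_le (by norm_num) (by linarith)
        _ ≤ (cB : ℝ) := hcBge
    have h2 := mul_le_mul_of_nonneg_right key (le_of_lt hδ0)
    calc (2:ℝ) ^ tB = ((2:ℝ) ^ tB * (1 / δ)) * δ := by field_simp
      _ ≤ (cB : ℝ) * δ := h2
      _ = δ * cB := mul_comm _ _
  have hrJ : (2:ℝ) ^ tJ ≤ δ * (cA * cB) := by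
    -- the log-log term is nonnegative
    have hM1 : (1:ℝ) ≤ (max (Fintype.card 𝒳) (Fintype.card 𝒴) : ℝ) := by
      calc (1:ℝ) ≤ (Fintype.card 𝒳 : ℝ) := by exact_mod_cast Fintype.card_pos
        _ ≤ _ := by exact_mod_cast le_max_left _ _
    have hMδ : (2:ℝ) ≤ (max (Fintype.card 𝒳) (Fintype.card 𝒴) : ℝ) / δ := by
      rw [le_div_iff₀ hδ0]; nlinarith
    have hlog1 : (1:ℝ) ≤ logb 2 ((max (Fintype.card 𝒳) (Fintype.card 𝒴) : ℝ) / δ) := by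
      calc (1:ℝ) = logb 2 2 := by simp
        _ ≤ _ := Real.logb_le_logb_of_le (by norm_num) (by norm_num) hMδ
    have hLL0 : 0 ≤ logb 2 (logb 2 ((max (Fintype.card 𝒳) (Fintype.card 𝒴) : ℝ) / δ)) :=
      Real.logb_nonneg (by norm_num) hlog1
    have key : (2:ℝ) ^ tJ * (1 / δ) ≤ (cA : ℝ) * cB := by
      calc (2:ℝ) ^ tJ * (1 / δ) = (2:ℝ) ^ (tJ + L) := by
            rw [Real.rpow_add (by norm_num : (0:ℝ) < 2), h2L]
        _ ≤ (2:ℝ) ^ ((R₁ + 3 * L) + (R₂ + 3 * L)) :=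
            Real.rpow_le_rpow_of_exponent_le (by norm_num) (by linarith)
        _ = (2:ℝ) ^ (R₁ + 3 * L) * (2:ℝ) ^ (R₂ + 3 * L) :=
            Real.rpow_add (by norm_num : (0:ℝ) < 2) _ _
        _ ≤ (cA : ℝ) * cB := by
            apply mul_le_mul hcAge hcBge (le_of_lt (Real.rpow_pos_of_pos (by norm_num) _))
              (by positivity)
    have h2 := mul_le_mul_of_nonneg_right key (le_of_lt hδ0)
    calc (2:ℝ) ^ tJ = ((2:ℝ) ^ tJ * (1 / δ)) * δ := by field_simp
      _ ≤ ((cA : ℝ) * cB) * δ := h2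
      _ = δ * (cA * cB) := by push_cast; ring
  -- the typical set
  set T : Finset (𝒳 × 𝒴) := Finset.univ.filter (fun z => 0 < q z ∧
      (2:ℝ) ^ (-tA) ≤ wA z ∧ (2:ℝ) ^ (-tB) ≤ wB z ∧ (2:ℝ) ^ (-tJ) ≤ q z) with hTdef
  -- atypical mass
  have hMA : ∑ z ∈ Finset.univ.filter (fun z => 0 < q z ∧ wA z < (2:ℝ)^(-tA)), q z ≤ ε/3 := by
    have h := markov_info' q wA hq hwA ε hε0
    rw [htAdef, hHA]
    exact h
  have hMB : ∑ z ∈ Finset.univ.filter (fun z => 0 < q z ∧ wB z < (2:ℝ)^(-tB)), q z ≤ ε/3 := by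
    have h := markov_info' q wB hq hwB ε hε0
    rw [htBdef, hHB]
    exact h
  have hMJ : ∑ z ∈ Finset.univ.filter (fun z => 0 < q z ∧ q z < (2:ℝ)^(-tJ)), q z ≤ ε/3 := by
    have h := markov_info' q q hq hwJ ε hε0
    rw [htJdef, hHJ]
    exact h
  have hAtyp : ∑ z ∈ Finset.univ \ T, q z ≤ ε := by
    have hpt : ∀ z ∈ Finset.univ \ T, q z ≤
        (if 0 < q z ∧ wA z < (2:ℝ)^(-tA) then q z else 0) +
        (if 0 < q z ∧ wB z < (2:ℝ)^(-tB) then q z else 0) +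
        (if 0 < q z ∧ q z < (2:ℝ)^(-tJ) then q z else 0) := by
      intro z hz
      rw [Finset.mem_sdiff, hTdef, Finset.mem_filter] at hz
      rcases le_or_gt (q z) 0 with h | h
      · have h0 : q z = 0 := le_antisymm h (hq z)
        split_ifs <;> simp [h0]
      · have hnot : ¬((2:ℝ)^(-tA) ≤ wA z ∧ (2:ℝ)^(-tB) ≤ wB z ∧ (2:ℝ)^(-tJ) ≤ q z) := by
          intro hc
          exact hz.2 ⟨Finset.mem_univ z, h, hc.1, hc.2.1, hc.2.2⟩
        push_neg at hnot
        have key : wA z < (2:ℝ)^(-tA) ∨ wB z < (2:ℝ)^(-tB) ∨ q z < (2:ℝ)^(-tJ) := by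
          by_cases hA : (2:ℝ)^(-tA) ≤ wA z
          · by_cases hB : (2:ℝ)^(-tB) ≤ wB z
            · exact Or.inr (Or.inr (hnot hA hB))
            · exact Or.inr (Or.inl (not_le.mp hB))
          · exact Or.inl (not_le.mp hA)
        rcases key with k | k | k
        · have e1 : (if 0 < q z ∧ wA z < (2:ℝ)^(-tA) then q z else 0) = q z := if_pos ⟨h, k⟩
          rw [e1]; split_ifs <;> linarith
        · have e2 : (if 0 < q z ∧ wB z < (2:ℝ)^(-tB) then q z else 0) = q z := if_pos ⟨h, k⟩
          rw [e2]; split_ifs <;> linarith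
        · have e3 : (if 0 < q z ∧ q z < (2:ℝ)^(-tJ) then q z else 0) = q z := if_pos ⟨h, k⟩
          rw [e3]; split_ifs <;> linarith
    calc ∑ z ∈ Finset.univ \ T, q z
        ≤ ∑ z ∈ Finset.univ \ T,
          ((if 0 < q z ∧ wA z < (2:ℝ)^(-tA) then q z else 0) +
           (if 0 < q z ∧ wB z < (2:ℝ)^(-tB) then q z else 0) +
           (if 0 < q z ∧ q z < (2:ℝ)^(-tJ) then q z else 0)) := Finset.sum_le_sum hpt
      _ ≤ ∑ z : 𝒳 × 𝒴,
          ((if 0 < q z ∧ wA z < (2:ℝ)^(-tA) then q z else 0) +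
           (if 0 < q z ∧ wB z < (2:ℝ)^(-tB) then q z else 0) +
           (if 0 < q z ∧ q z < (2:ℝ)^(-tJ) then q z else 0)) := by
          refine Finset.sum_le_sum_of_subset_of_nonneg (Finset.sdiff_subset) fun z _ _ => ?_
          have := hq z
          split_ifs <;> linarith
      _ = (∑ z ∈ Finset.univ.filter (fun z => 0 < q z ∧ wA z < (2:ℝ)^(-tA)), q z) +
          (∑ z ∈ Finset.univ.filter (fun z => 0 < q z ∧ wB z < (2:ℝ)^(-tB)), q z) +
          (∑ z ∈ Finset.univ.filter (fun z => 0 < q z ∧ q z < (2:ℝ)^(-tJ)), q z) := by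
          rw [Finset.sum_add_distrib, Finset.sum_add_distrib,
            Finset.sum_filter, Finset.sum_filter, Finset.sum_filter]
      _ ≤ ε/3 + ε/3 + ε/3 := by gcongr
      _ = ε := by ring
  -- counting bounds
  have hcondsumA : ∀ y : 𝒴, ∑ x', condXY2 p x' y ≤ 1 := by
    intro y
    have he : ∑ x', condXY2 p x' y = margY2 p y / margY2 p y := by
      simp only [condXY2]
      rw [← Finset.sum_div]
      rfl
    rw [he]
    rcases eq_or_ne (margY2 p y) 0 with h | h
    · rw [h]; norm_num
    · rw [div_self h]
  have hcountA : ∀ z : 𝒳 × 𝒴,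
      ((Finset.univ.filter (fun x' => (x', z.2) ∈ T ∧ x' ≠ z.1)).card : ℝ) ≤ (2:ℝ)^tA := by
    intro z
    refine card_le_rpow' _ (fun x' => condXY2 p x' z.2)
      (fun x' => div_nonneg (hp0 x' z.2) (Finset.sum_nonneg fun x _ => hp0 x z.2))
      (hcondsumA z.2) tA ?_
    intro x' hx'
    rw [Finset.mem_filter] at hx'
    have hT' := hx'.2.1
    rw [hTdef, Finset.mem_filter] at hT'
    exact hT'.2.2.1
  have hcondsumB : ∀ x : 𝒳, ∑ y', condYX2 p y' x ≤ 1 := by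
    intro x
    have he : ∑ y', condYX2 p y' x = margX2 p x / margX2 p x := by
      simp only [condYX2]
      rw [← Finset.sum_div]
      rfl
    rw [he]
    rcases eq_or_ne (margX2 p x) 0 with h | h
    · rw [h]; norm_num
    · rw [div_self h]
  have hcountB : ∀ z : 𝒳 × 𝒴,
      ((Finset.univ.filter (fun y' => (z.1, y') ∈ T ∧ y' ≠ z.2)).card : ℝ) ≤ (2:ℝ)^tB := by
    intro z
    refine card_le_rpow' _ (fun y' => condYX2 p y' z.1)
      (fun y' => div_nonneg (hp0 z.1 y') (Finset.sum_nonneg fun y _ => hp0 z.1 y))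
      (hcondsumB z.1) tB ?_
    intro y' hy'
    rw [Finset.mem_filter] at hy'
    have hT' := hy'.2.1
    rw [hTdef, Finset.mem_filter] at hT'
    exact hT'.2.2.2.1
  have hcountJ : ∀ z : 𝒳 × 𝒴,
      ((T.filter (fun z' => z'.1 ≠ z.1 ∧ z'.2 ≠ z.2)).card : ℝ) ≤ (2:ℝ)^tJ := by
    intro z
    refine card_le_rpow' _ q hq (le_of_eq hq1) tJ ?_
    intro z' hz'
    rw [Finset.mem_filter] at hz'
    have hT' := hz'.1
    rw [hTdef, Finset.mem_filter] at hT'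
    exact hT'.2.2.2.2
  -- the decoder
  haveI : NeZero cA := ⟨Nat.pos_iff_ne_zero.mp hcA0⟩
  haveI : NeZero cB := ⟨Nat.pos_iff_ne_zero.mp hcB0⟩
  set G : (𝒳 → Fin cA) → (𝒴 → Fin cB) → Fin cA → Fin cB → 𝒳 × 𝒴 := fun fA fB a b =>
    if h : ∃ z : 𝒳 × 𝒴, z ∈ T ∧ fA z.1 = a ∧ fB z.2 = b then h.choose
    else Classical.arbitrary _ with hGdef
  set Err : ((𝒳 → Fin cA) × (𝒴 → Fin cB)) → ℝ := fun f =>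
    ∑ x, ∑ y, (if G f.1 f.2 (f.1 x) (f.2 y) ≠ (x, y) then p x y else 0) with hErrdef
  -- expectation bound
  have hCF0 : (0:ℝ) ≤ (Fintype.card ((𝒳 → Fin cA) × (𝒴 → Fin cB)) : ℝ) := by positivity
  -- pointwise bound on the error indicator by collision indicators, for typical pairs
  have hpoint : ∀ z ∈ T, ∀ f : (𝒳 → Fin cA) × (𝒴 → Fin cB),
      (if G f.1 f.2 (f.1 z.1) (f.2 z.2) ≠ z then q z else 0) ≤
      q z * ((∑ x' ∈ Finset.univ.filter (fun x' => (x', z.2) ∈ T ∧ x' ≠ z.1),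
               (if f.1 x' = f.1 z.1 then (1:ℝ) else 0)) +
             (∑ y' ∈ Finset.univ.filter (fun y' => (z.1, y') ∈ T ∧ y' ≠ z.2),
               (if f.2 y' = f.2 z.2 then (1:ℝ) else 0)) +
             (∑ z' ∈ T.filter (fun z' => z'.1 ≠ z.1 ∧ z'.2 ≠ z.2),
               (if f.1 z'.1 = f.1 z.1 ∧ f.2 z'.2 = f.2 z.2 then (1:ℝ) else 0))) := by
    intro z hzT f
    have hE1 : (0:ℝ) ≤ ∑ x' ∈ Finset.univ.filter (fun x' => (x', z.2) ∈ T ∧ x' ≠ z.1),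
        (if f.1 x' = f.1 z.1 then (1:ℝ) else 0) :=
      Finset.sum_nonneg fun i _ => by positivity
    have hE2 : (0:ℝ) ≤ ∑ y' ∈ Finset.univ.filter (fun y' => (z.1, y') ∈ T ∧ y' ≠ z.2),
        (if f.2 y' = f.2 z.2 then (1:ℝ) else 0) :=
      Finset.sum_nonneg fun i _ => by positivity
    have hE3 : (0:ℝ) ≤ ∑ z' ∈ T.filter (fun z' => z'.1 ≠ z.1 ∧ z'.2 ≠ z.2),
        (if f.1 z'.1 = f.1 z.1 ∧ f.2 z'.2 = f.2 z.2 then (1:ℝ) else 0) :=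
      Finset.sum_nonneg fun i _ => by positivity
    by_cases hg : G f.1 f.2 (f.1 z.1) (f.2 z.2) = z
    · rw [if_neg (not_not.mpr hg)]
      exact mul_nonneg (hq z) (by linarith)
    · rw [if_pos hg]
      have hex : ∃ z' : 𝒳 × 𝒴, z' ∈ T ∧ f.1 z'.1 = f.1 z.1 ∧ f.2 z'.2 = f.2 z.2 :=
        ⟨z, hzT, rfl, rfl⟩
      have hgc : G f.1 f.2 (f.1 z.1) (f.2 z.2) = hex.choose := dif_pos hex
      obtain ⟨hcT, hcA', hcB'⟩ := hex.choose_spec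
      have hne : hex.choose ≠ z := by rw [hgc] at hg; exact hg
      have hsum1 : (1:ℝ) ≤
          (∑ x' ∈ Finset.univ.filter (fun x' => (x', z.2) ∈ T ∧ x' ≠ z.1),
            (if f.1 x' = f.1 z.1 then (1:ℝ) else 0)) +
          (∑ y' ∈ Finset.univ.filter (fun y' => (z.1, y') ∈ T ∧ y' ≠ z.2),
            (if f.2 y' = f.2 z.2 then (1:ℝ) else 0)) +
          (∑ z' ∈ T.filter (fun z' => z'.1 ≠ z.1 ∧ z'.2 ≠ z.2),
            (if f.1 z'.1 = f.1 z.1 ∧ f.2 z'.2 = f.2 z.2 then (1:ℝ) else 0)) := by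
        by_cases h1 : hex.choose.1 = z.1
        · by_cases h2 : hex.choose.2 = z.2
          · exact absurd (Prod.ext h1 h2) hne
          · have hmem : hex.choose.2 ∈
                Finset.univ.filter (fun y' => (z.1, y') ∈ T ∧ y' ≠ z.2) := by
              rw [Finset.mem_filter]
              refine ⟨Finset.mem_univ _, ?_, h2⟩
              have he : (z.1, hex.choose.2) = hex.choose := Prod.ext h1.symm rfl
              rw [he]; exact hcT
            have hle := Finset.single_le_sum
              (f := fun y' => if f.2 y' = f.2 z.2 then (1:ℝ) else 0)
              (fun i _ => by positivity) hmem
            simp only [hcB', if_true, eq_self_iff_true] at hle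
            linarith
        · by_cases h2 : hex.choose.2 = z.2
          · have hmem : hex.choose.1 ∈
                Finset.univ.filter (fun x' => (x', z.2) ∈ T ∧ x' ≠ z.1) := by
              rw [Finset.mem_filter]
              refine ⟨Finset.mem_univ _, ?_, h1⟩
              have he : (hex.choose.1, z.2) = hex.choose := Prod.ext rfl h2.symm
              rw [he]; exact hcT
            have hle := Finset.single_le_sum
              (f := fun x' => if f.1 x' = f.1 z.1 then (1:ℝ) else 0)
              (fun i _ => by positivity) hmem
            simp only [hcA', if_true, eq_self_iff_true] at hle
            linarith
          · have hmem : hex.choose ∈ T.filter (fun z' => z'.1 ≠ z.1 ∧ z'.2 ≠ z.2) :=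
              Finset.mem_filter.mpr ⟨hcT, h1, h2⟩
            have hle := Finset.single_le_sum
              (f := fun z' => if f.1 z'.1 = f.1 z.1 ∧ f.2 z'.2 = f.2 z.2 then (1:ℝ) else 0)
              (fun i _ => by positivity) hmem
            simp only [hcA', hcB', and_self, if_true, eq_self_iff_true] at hle
            linarith
      calc q z = q z * 1 := (mul_one _).symm
        _ ≤ _ := mul_le_mul_of_nonneg_left hsum1 (hq z)
  -- expected error on typical pairs
  have hTsum : ∀ z ∈ T,
      ∑ f : (𝒳 → Fin cA) × (𝒴 → Fin cB),
        (if G f.1 f.2 (f.1 z.1) (f.2 z.2) ≠ z then q z else 0) ≤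
      (Fintype.card ((𝒳 → Fin cA) × (𝒴 → Fin cB)) : ℝ) * (3 * δ) * q z := by
    intro z hzT
    have hb1 : ∑ f : (𝒳 → Fin cA) × (𝒴 → Fin cB),
        ∑ x' ∈ Finset.univ.filter (fun x' => (x', z.2) ∈ T ∧ x' ≠ z.1),
          (if f.1 x' = f.1 z.1 then (1:ℝ) else 0) ≤
        (Fintype.card ((𝒳 → Fin cA) × (𝒴 → Fin cB)) : ℝ) * δ := by
      rw [Finset.sum_comm]
      rw [Finset.sum_congr rfl (fun x' hx' =>
        sum_collide_fst' cA cB hcA0 (Finset.mem_filter.mp hx').2.2)]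
      rw [Finset.sum_const, nsmul_eq_mul]
      calc ((Finset.univ.filter (fun x' => (x', z.2) ∈ T ∧ x' ≠ z.1)).card : ℝ) *
            ((Fintype.card ((𝒳 → Fin cA) × (𝒴 → Fin cB)) : ℝ) / cA)
          ≤ (2:ℝ)^tA * ((Fintype.card ((𝒳 → Fin cA) × (𝒴 → Fin cB)) : ℝ) / cA) := by
            apply mul_le_mul_of_nonneg_right (hcountA z) (by positivity)
        _ ≤ (δ * cA) * ((Fintype.card ((𝒳 → Fin cA) × (𝒴 → Fin cB)) : ℝ) / cA) := by
            apply mul_le_mul_of_nonneg_right hrA (by positivity)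
        _ = (Fintype.card ((𝒳 → Fin cA) × (𝒴 → Fin cB)) : ℝ) * δ := by
            have : (cA:ℝ) ≠ 0 := by exact_mod_cast hcA0.ne'
            field_simp
    have hb2 : ∑ f : (𝒳 → Fin cA) × (𝒴 → Fin cB),
        ∑ y' ∈ Finset.univ.filter (fun y' => (z.1, y') ∈ T ∧ y' ≠ z.2),
          (if f.2 y' = f.2 z.2 then (1:ℝ) else 0) ≤
        (Fintype.card ((𝒳 → Fin cA) × (𝒴 → Fin cB)) : ℝ) * δ := by
      rw [Finset.sum_comm]
      rw [Finset.sum_congr rfl (fun y' hy' =>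
        sum_collide_snd' cA cB hcB0 (Finset.mem_filter.mp hy').2.2)]
      rw [Finset.sum_const, nsmul_eq_mul]
      calc ((Finset.univ.filter (fun y' => (z.1, y') ∈ T ∧ y' ≠ z.2)).card : ℝ) *
            ((Fintype.card ((𝒳 → Fin cA) × (𝒴 → Fin cB)) : ℝ) / cB)
          ≤ (2:ℝ)^tB * ((Fintype.card ((𝒳 → Fin cA) × (𝒴 → Fin cB)) : ℝ) / cB) := by
            apply mul_le_mul_of_nonneg_right (hcountB z) (by positivity)
        _ ≤ (δ * cB) * ((Fintype.card ((𝒳 → Fin cA) × (𝒴 → Fin cB)) : ℝ) / cB) := by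
            apply mul_le_mul_of_nonneg_right hrB (by positivity)
        _ = (Fintype.card ((𝒳 → Fin cA) × (𝒴 → Fin cB)) : ℝ) * δ := by
            have : (cB:ℝ) ≠ 0 := by exact_mod_cast hcB0.ne'
            field_simp
    have hb3 : ∑ f : (𝒳 → Fin cA) × (𝒴 → Fin cB),
        ∑ z' ∈ T.filter (fun z' => z'.1 ≠ z.1 ∧ z'.2 ≠ z.2),
          (if f.1 z'.1 = f.1 z.1 ∧ f.2 z'.2 = f.2 z.2 then (1:ℝ) else 0) ≤
        (Fintype.card ((𝒳 → Fin cA) × (𝒴 → Fin cB)) : ℝ) * δ := by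
      rw [Finset.sum_comm]
      rw [Finset.sum_congr rfl (fun z' hz' =>
        sum_collide_pair' cA cB hcA0 hcB0 (Finset.mem_filter.mp hz').2.1
          (Finset.mem_filter.mp hz').2.2)]
      rw [Finset.sum_const, nsmul_eq_mul]
      calc ((T.filter (fun z' => z'.1 ≠ z.1 ∧ z'.2 ≠ z.2)).card : ℝ) *
            ((Fintype.card ((𝒳 → Fin cA) × (𝒴 → Fin cB)) : ℝ) / (cA * cB))
          ≤ (2:ℝ)^tJ * ((Fintype.card ((𝒳 → Fin cA) × (𝒴 → Fin cB)) : ℝ) / (cA * cB)) := by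
            apply mul_le_mul_of_nonneg_right (hcountJ z) (by positivity)
        _ ≤ (δ * (cA * cB)) *
            ((Fintype.card ((𝒳 → Fin cA) × (𝒴 → Fin cB)) : ℝ) / (cA * cB)) := by
            apply mul_le_mul_of_nonneg_right hrJ (by positivity)
        _ = (Fintype.card ((𝒳 → Fin cA) × (𝒴 → Fin cB)) : ℝ) * δ := by
            have h1 : (cA:ℝ) ≠ 0 := by exact_mod_cast hcA0.ne'
            have h2 : (cB:ℝ) ≠ 0 := by exact_mod_cast hcB0.ne'
            field_simp
    calc ∑ f : (𝒳 → Fin cA) × (𝒴 → Fin cB),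
          (if G f.1 f.2 (f.1 z.1) (f.2 z.2) ≠ z then q z else 0)
        ≤ ∑ f : (𝒳 → Fin cA) × (𝒴 → Fin cB),
          q z * ((∑ x' ∈ Finset.univ.filter (fun x' => (x', z.2) ∈ T ∧ x' ≠ z.1),
                   (if f.1 x' = f.1 z.1 then (1:ℝ) else 0)) +
                 (∑ y' ∈ Finset.univ.filter (fun y' => (z.1, y') ∈ T ∧ y' ≠ z.2),
                   (if f.2 y' = f.2 z.2 then (1:ℝ) else 0)) +
                 (∑ z' ∈ T.filter (fun z' => z'.1 ≠ z.1 ∧ z'.2 ≠ z.2),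
                   (if f.1 z'.1 = f.1 z.1 ∧ f.2 z'.2 = f.2 z.2 then (1:ℝ) else 0))) :=
          Finset.sum_le_sum fun f _ => hpoint z hzT f
      _ = q z * ((∑ f : (𝒳 → Fin cA) × (𝒴 → Fin cB),
              ∑ x' ∈ Finset.univ.filter (fun x' => (x', z.2) ∈ T ∧ x' ≠ z.1),
                (if f.1 x' = f.1 z.1 then (1:ℝ) else 0)) +
            (∑ f : (𝒳 → Fin cA) × (𝒴 → Fin cB),
              ∑ y' ∈ Finset.univ.filter (fun y' => (z.1, y') ∈ T ∧ y' ≠ z.2),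
                (if f.2 y' = f.2 z.2 then (1:ℝ) else 0)) +
            (∑ f : (𝒳 → Fin cA) × (𝒴 → Fin cB),
              ∑ z' ∈ T.filter (fun z' => z'.1 ≠ z.1 ∧ z'.2 ≠ z.2),
                (if f.1 z'.1 = f.1 z.1 ∧ f.2 z'.2 = f.2 z.2 then (1:ℝ) else 0))) := by
          rw [← Finset.mul_sum, Finset.sum_add_distrib, Finset.sum_add_distrib]
      _ ≤ q z * ((Fintype.card ((𝒳 → Fin cA) × (𝒴 → Fin cB)) : ℝ) * δ +
            (Fintype.card ((𝒳 → Fin cA) × (𝒴 → Fin cB)) : ℝ) * δ +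
            (Fintype.card ((𝒳 → Fin cA) × (𝒴 → Fin cB)) : ℝ) * δ) := by
          apply mul_le_mul_of_nonneg_left _ (hq z)
          linarith
      _ = (Fintype.card ((𝒳 → Fin cA) × (𝒴 → Fin cB)) : ℝ) * (3 * δ) * q z := by ring
  -- atypical pairs
  have hNTsum : ∀ z : 𝒳 × 𝒴,
      ∑ f : (𝒳 → Fin cA) × (𝒴 → Fin cB),
        (if G f.1 f.2 (f.1 z.1) (f.2 z.2) ≠ z then q z else 0) ≤
      (Fintype.card ((𝒳 → Fin cA) × (𝒴 → Fin cB)) : ℝ) * q z := by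
    intro z
    calc ∑ f : (𝒳 → Fin cA) × (𝒴 → Fin cB),
          (if G f.1 f.2 (f.1 z.1) (f.2 z.2) ≠ z then q z else 0)
        ≤ ∑ _f : (𝒳 → Fin cA) × (𝒴 → Fin cB), q z :=
          Finset.sum_le_sum fun f _ => by
            split_ifs
            · exact le_refl _
            · exact hq z
      _ = (Fintype.card ((𝒳 → Fin cA) × (𝒴 → Fin cB)) : ℝ) * q z := by
          rw [Finset.sum_const, Finset.card_univ, nsmul_eq_mul]
  have hTq1 : ∑ z ∈ T, q z ≤ 1 := by
    rw [← hq1]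
    exact Finset.sum_le_sum_of_subset_of_nonneg (Finset.subset_univ T) fun z _ _ => hq z
  have hExp : ∑ f : (𝒳 → Fin cA) × (𝒴 → Fin cB), Err f ≤
      ∑ _f : (𝒳 → Fin cA) × (𝒴 → Fin cB), (ε + 3 * δ) := by
    calc ∑ f : (𝒳 → Fin cA) × (𝒴 → Fin cB), Err f
        = ∑ f : (𝒳 → Fin cA) × (𝒴 → Fin cB), ∑ z : 𝒳 × 𝒴,
            (if G f.1 f.2 (f.1 z.1) (f.2 z.2) ≠ z then q z else 0) := by
          refine Finset.sum_congr rfl fun f _ => ?_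
          exact (Fintype.sum_prod_type
            (fun z : 𝒳 × 𝒴 => if G f.1 f.2 (f.1 z.1) (f.2 z.2) ≠ z then q z else 0)).symm
      _ = ∑ z : 𝒳 × 𝒴, ∑ f : (𝒳 → Fin cA) × (𝒴 → Fin cB),
            (if G f.1 f.2 (f.1 z.1) (f.2 z.2) ≠ z then q z else 0) := Finset.sum_comm
      _ = (∑ z ∈ T, ∑ f : (𝒳 → Fin cA) × (𝒴 → Fin cB),
            (if G f.1 f.2 (f.1 z.1) (f.2 z.2) ≠ z then q z else 0)) +
          (∑ z ∈ Finset.univ \ T, ∑ f : (𝒳 → Fin cA) × (𝒴 → Fin cB),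
            (if G f.1 f.2 (f.1 z.1) (f.2 z.2) ≠ z then q z else 0)) := by
          rw [← Finset.sum_sdiff (Finset.subset_univ T), add_comm]
      _ ≤ (∑ z ∈ T, (Fintype.card ((𝒳 → Fin cA) × (𝒴 → Fin cB)) : ℝ) * (3 * δ) * q z) +
          (∑ z ∈ Finset.univ \ T, (Fintype.card ((𝒳 → Fin cA) × (𝒴 → Fin cB)) : ℝ) * q z) :=
          add_le_add (Finset.sum_le_sum fun z hz => hTsum z hz)
            (Finset.sum_le_sum fun z _ => hNTsum z)
      _ = (Fintype.card ((𝒳 → Fin cA) × (𝒴 → Fin cB)) : ℝ) * (3 * δ) * (∑ z ∈ T, q z) +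
          (Fintype.card ((𝒳 → Fin cA) × (𝒴 → Fin cB)) : ℝ) * (∑ z ∈ Finset.univ \ T, q z) := by
          rw [Finset.mul_sum, Finset.mul_sum]
      _ ≤ (Fintype.card ((𝒳 → Fin cA) × (𝒴 → Fin cB)) : ℝ) * (3 * δ) * 1 +
          (Fintype.card ((𝒳 → Fin cA) × (𝒴 → Fin cB)) : ℝ) * ε := by
          apply add_le_add
          · apply mul_le_mul_of_nonneg_left hTq1 (by positivity)
          · apply mul_le_mul_of_nonneg_left hAtyp hCF0
      _ = ∑ _f : (𝒳 → Fin cA) × (𝒴 → Fin cB), (ε + 3 * δ) := by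
          rw [Finset.sum_const, Finset.card_univ, nsmul_eq_mul]
          ring
  -- derandomize
  haveI : Nonempty (Fin cA) := ⟨⟨0, hcA0⟩⟩
  haveI : Nonempty (Fin cB) := ⟨⟨0, hcB0⟩⟩
  obtain ⟨f, -, hf⟩ := Finset.exists_le_of_sum_le Finset.univ_nonempty hExp
  refine ⟨cA, cB, f.1, f.2, G f.1 f.2, le_of_eq hcAbound, le_of_eq hcBbound, ?_⟩
  have hfin : Err f ≤ ε + 8 * δ := le_trans hf (by linarith)
  exact hfin

end
end

section
/- Let K be a positive integer, δ ∈ (0,1), and let (W,V,E,F) be jointly distributed over [K]⁴ such that, conditioned on (W,V)=(w,v), the pair (E,F) is uniformly distributed on {1,…,w}×{1,…,v}. Suppose the support of (W,V) is contained in the square T := {a⁰, a⁰+1, …, a¹}×{b⁰, b⁰+1, …, b¹}, where 1 ≤ a⁰ ≤ a¹ ≤ K and 1 ≤ b⁰ ≤ b¹ ≤ K. Define Bad := { (e,f) ∈ [K]×[K] : (e,f) ∉ T and Pr_{(w,v)~WV}[ w ≥ e and v ≥ f ] ≤ δ }. Then Pr[(E,F) ∈ Bad] ≤ 2δ. -/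
open Finset Real
open scoped Classical

noncomputable section

/-- Marginal on `(W, V)` of a joint distribution on `Fin K × Fin K × Fin K × Fin K`
(coordinates ordered as `(w, v, e, f)`). -/
def margWV {K : ℕ} (p : Fin K → Fin K → Fin K → Fin K → ℝ) (w v : Fin K) : ℝ :=
  ∑ e, ∑ f, p w v e f

lemma aux_tail_bound {K : ℕ} (δ : ℝ) (hδ : 0 ≤ δ)
    (r : Fin K → Fin K → ℝ) (g : Fin K → ℝ)
    (hr0 : ∀ v f, 0 ≤ r v f)
    (hr : ∀ v f : Fin K, ¬ f ≤ v → r v f = 0)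
    (hsum : ∀ v, (∑ f, r v f) ≤ g v) :
    (∑ f : Fin K, if (∑ v, if f ≤ v then g v else 0) ≤ δ then (∑ v, r v f) else 0) ≤ δ := by
  have hg0 : ∀ v, 0 ≤ g v := fun v => le_trans (Finset.sum_nonneg fun f _ => hr0 v f) (hsum v)
  set A : Finset (Fin K) := Finset.univ.filter (fun f => (∑ v, if f ≤ v then g v else 0) ≤ δ) with hA
  have hrw : (∑ f : Fin K, if (∑ v, if f ≤ v then g v else 0) ≤ δ then (∑ v, r v f) else 0)
      = ∑ f ∈ A, ∑ v, r v f := by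
    rw [hA, Finset.sum_filter]
  rw [hrw]
  rcases A.eq_empty_or_nonempty with h | h
  · simp [h, hδ]
  · set f₀ := A.min' h with hf₀
    have hf₀mem : f₀ ∈ A := A.min'_mem h
    have hf₀δ : (∑ v, if f₀ ≤ v then g v else 0) ≤ δ := by
      have := Finset.mem_filter.mp hf₀mem
      exact this.2
    have hsub : A ⊆ Finset.univ.filter (fun f => f₀ ≤ f) := by
      intro f hf
      simp only [Finset.mem_filter, Finset.mem_univ, true_and]
      exact A.min'_le f hf
    have h1 : (∑ f ∈ A, ∑ v, r v f) ≤ ∑ f ∈ Finset.univ.filter (fun f => f₀ ≤ f), ∑ v, r v f :=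
      Finset.sum_le_sum_of_subset_of_nonneg hsub
        (fun f _ _ => Finset.sum_nonneg fun v _ => hr0 v f)
    have h2 : (∑ f ∈ Finset.univ.filter (fun f => f₀ ≤ f), ∑ v, r v f)
        = ∑ v, ∑ f ∈ Finset.univ.filter (fun f => f₀ ≤ f), r v f := Finset.sum_comm
    have h3 : ∀ v : Fin K, (∑ f ∈ Finset.univ.filter (fun f => f₀ ≤ f), r v f)
        ≤ if f₀ ≤ v then g v else 0 := by
      intro v
      by_cases hv : f₀ ≤ v
      · rw [if_pos hv]
        calc (∑ f ∈ Finset.univ.filter (fun f => f₀ ≤ f), r v f)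
            ≤ ∑ f : Fin K, r v f := Finset.sum_le_sum_of_subset_of_nonneg
              (Finset.filter_subset _ _) (fun f _ _ => hr0 v f)
          _ ≤ g v := hsum v
      · rw [if_neg hv]
        apply le_of_eq
        apply Finset.sum_eq_zero
        intro f hf
        have hf₀f : f₀ ≤ f := (Finset.mem_filter.mp hf).2
        apply hr
        intro hfv
        exact hv (le_trans hf₀f hfv)
    calc (∑ f ∈ A, ∑ v, r v f) ≤ _ := h1
      _ = _ := h2
      _ ≤ ∑ v, if f₀ ≤ v then g v else 0 := Finset.sum_le_sum fun v _ => h3 v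
      _ ≤ δ := hf₀δ

/-- Claim 3.10: let `(W,V,E,F)` be jointly distributed over `[K]⁴`
(modelled as `Fin K`, a value `w : Fin K` representing the integer `w+1`), with `(E,F)`
uniform on `{1,…,w}×{1,…,v}` conditioned on `(W,V)=(w,v)`, and suppose the support of
`(W,V)` is contained in the square `T = {a⁰,…,a¹}×{b⁰,…,b¹}`.  With
`Bad = { (e,f) ∉ T : Pr_{(w,v)∼WV}[w ≥ e ∧ v ≥ f] ≤ δ }`, one has
`Pr[(E,F) ∈ Bad] ≤ 2δ`. -/
theorem bad_set_probability_bound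
    {K : ℕ} (hK : 0 < K) (δ : ℝ) (hδ0 : 0 < δ) (hδ1 : δ < 1)
    (p : Fin K → Fin K → Fin K → Fin K → ℝ)
    (hp0 : ∀ w v e f, 0 ≤ p w v e f)
    (hp1 : (∑ w, ∑ v, ∑ e, ∑ f, p w v e f) = 1)
    (hcond : ∀ w v e f, p w v e f = margWV p w v *
      (if e ≤ w ∧ f ≤ v then 1 / (((w : ℕ) : ℝ) + 1) / (((v : ℕ) : ℝ) + 1) else 0))
    (a₀ a₁ b₀ b₁ : ℕ)
    (ha : 1 ≤ a₀) (ha' : a₀ ≤ a₁) (ha'' : a₁ ≤ K)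
    (hb : 1 ≤ b₀) (hb' : b₀ ≤ b₁) (hb'' : b₁ ≤ K)
    (hsupp : ∀ w v : Fin K, 0 < margWV p w v →
      (a₀ ≤ (w : ℕ) + 1 ∧ (w : ℕ) + 1 ≤ a₁ ∧ b₀ ≤ (v : ℕ) + 1 ∧ (v : ℕ) + 1 ≤ b₁)) :
    (∑ e : Fin K, ∑ f : Fin K,
      (if ¬(a₀ ≤ (e : ℕ) + 1 ∧ (e : ℕ) + 1 ≤ a₁ ∧ b₀ ≤ (f : ℕ) + 1 ∧ (f : ℕ) + 1 ≤ b₁) ∧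
          (∑ w, ∑ v, (if e ≤ w ∧ f ≤ v then margWV p w v else 0)) ≤ δ
        then ∑ w, ∑ v, p w v e f else 0)) ≤ 2 * δ := by
  set q : Fin K → Fin K → ℝ := margWV p with hqdef
  have hq0 : ∀ w v, 0 ≤ q w v := fun w v =>
    Finset.sum_nonneg fun e _ => Finset.sum_nonneg fun f _ => hp0 w v e f
  have hqsum : ∀ w v, q w v = ∑ e, ∑ f, p w v e f := fun w v => rfl
  have hpz : ∀ w v e f : Fin K, ¬(e ≤ w ∧ f ≤ v) → p w v e f = 0 := by
    intro w v e f h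
    rw [hcond, if_neg h, mul_zero]
  -- marginal of (E,F)
  set m : Fin K → Fin K → ℝ := fun e f => ∑ w, ∑ v, p w v e f with hmdef
  have hm0 : ∀ e f, 0 ≤ m e f := fun e f =>
    Finset.sum_nonneg fun w _ => Finset.sum_nonneg fun v _ => hp0 w v e f
  set GA : Fin K → ℝ := fun f => ∑ v, if f ≤ v then (∑ w, q w v) else 0 with hGAdef
  set GB : Fin K → ℝ := fun e => ∑ w, if e ≤ w then (∑ v, q w v) else 0 with hGBdef
  -- pointwise bound
  have hpt : ∀ e f : Fin K,
      (if ¬(a₀ ≤ (e : ℕ) + 1 ∧ (e : ℕ) + 1 ≤ a₁ ∧ b₀ ≤ (f : ℕ) + 1 ∧ (f : ℕ) + 1 ≤ b₁) ∧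
          (∑ w, ∑ v, (if e ≤ w ∧ f ≤ v then margWV p w v else 0)) ≤ δ
        then ∑ w, ∑ v, p w v e f else 0)
      ≤ (if ((e : ℕ) + 1 < a₀ ∧ GA f ≤ δ) then m e f else 0)
        + (if ((f : ℕ) + 1 < b₀ ∧ GB e ≤ δ) then m e f else 0) := by
    intro e f
    have hrhs0 : 0 ≤ (if ((e : ℕ) + 1 < a₀ ∧ GA f ≤ δ) then m e f else 0)
        + (if ((f : ℕ) + 1 < b₀ ∧ GB e ≤ δ) then m e f else 0) := by
      apply add_nonneg <;> (split <;> simp [hm0])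
    by_cases hc : ¬(a₀ ≤ (e : ℕ) + 1 ∧ (e : ℕ) + 1 ≤ a₁ ∧ b₀ ≤ (f : ℕ) + 1 ∧ (f : ℕ) + 1 ≤ b₁) ∧
          (∑ w, ∑ v, (if e ≤ w ∧ f ≤ v then margWV p w v else 0)) ≤ δ
    · rw [if_pos hc]
      by_cases hm : m e f = 0
      · exact le_trans (le_of_eq hm) hrhs0
      · have hmpos : 0 < m e f := lt_of_le_of_ne (hm0 e f) (Ne.symm hm)
        -- there is (w,v) with p w v e f > 0
        obtain ⟨w, -, hw⟩ := Finset.exists_lt_of_sum_lt (by simpa using hmpos :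
          (∑ w : Fin K, (0:ℝ)) < ∑ w, ∑ v, p w v e f)
        obtain ⟨v, -, hv⟩ := Finset.exists_lt_of_sum_lt (by simpa using hw :
          (∑ v : Fin K, (0:ℝ)) < ∑ v, p w v e f)
        have hpwv : 0 < p w v e f := hv
        have hef : e ≤ w ∧ f ≤ v := by
          by_contra h
          rw [hpz w v e f h] at hpwv; exact lt_irrefl 0 hpwv
        have hqpos : 0 < q w v := by
          rcases lt_or_eq_of_le (hq0 w v) with h | h
          · exact h
          · exfalso
            rw [hcond w v e f, ← h, zero_mul] at hpwv
            exact lt_irrefl 0 hpwv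
        obtain ⟨hw1, hw2, hv1, hv2⟩ := hsupp w v hqpos
        have hea : (e : ℕ) + 1 ≤ a₁ := le_trans (by exact_mod_cast Nat.succ_le_succ hef.1) hw2
        have hfb : (f : ℕ) + 1 ≤ b₁ := le_trans (by exact_mod_cast Nat.succ_le_succ hef.2) hv2
        -- not in T means e small or f small
        have hsmall : (e : ℕ) + 1 < a₀ ∨ (f : ℕ) + 1 < b₀ := by
          by_contra h
          push_neg at h
          exact hc.1 ⟨h.1, hea, h.2, hfb⟩
        rcases hsmall with hsA | hsB
        · -- G' = GA f
          have hG : (∑ w, ∑ v, (if e ≤ w ∧ f ≤ v then margWV p w v else 0)) = GA f := by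
            have h1 : ∀ w v : Fin K, (if e ≤ w ∧ f ≤ v then q w v else 0)
                = (if f ≤ v then q w v else 0) := by
              intro w v
              rcases eq_or_lt_of_le (hq0 w v) with h | h
              · simp [← h]
              · have hw' := (hsupp w v h).1
                have hew : e ≤ w := by
                  have h2 : (e : ℕ) ≤ (w : ℕ) := by omega
                  exact h2
                simp [hew]
            calc (∑ w, ∑ v, (if e ≤ w ∧ f ≤ v then q w v else 0))
                = ∑ w, ∑ v, (if f ≤ v then q w v else 0) :=
                  Finset.sum_congr rfl fun w _ => Finset.sum_congr rfl fun v _ => h1 w v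
              _ = ∑ v, ∑ w, (if f ≤ v then q w v else 0) := Finset.sum_comm
              _ = ∑ v, (if f ≤ v then (∑ w, q w v) else 0) :=
                  Finset.sum_congr rfl fun v _ => by split <;> simp
              _ = GA f := rfl
          have hcondA : (e : ℕ) + 1 < a₀ ∧ GA f ≤ δ := ⟨hsA, hG ▸ hc.2⟩
          rw [if_pos hcondA]
          have : (0:ℝ) ≤ if ((f : ℕ) + 1 < b₀ ∧ GB e ≤ δ) then m e f else 0 := by
            split <;> simp [hm0]
          linarith [this]
        · have hG : (∑ w, ∑ v, (if e ≤ w ∧ f ≤ v then margWV p w v else 0)) = GB e := by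
            have h1 : ∀ w v : Fin K, (if e ≤ w ∧ f ≤ v then q w v else 0)
                = (if e ≤ w then q w v else 0) := by
              intro w v
              rcases eq_or_lt_of_le (hq0 w v) with h | h
              · simp [← h]
              · have hv' := (hsupp w v h).2.2.1
                have hfv : f ≤ v := by
                  have h2 : (f : ℕ) ≤ (v : ℕ) := by omega
                  exact h2
                simp [hfv]
            calc (∑ w, ∑ v, (if e ≤ w ∧ f ≤ v then q w v else 0))
                = ∑ w, ∑ v, (if e ≤ w then q w v else 0) :=
                  Finset.sum_congr rfl fun w _ => Finset.sum_congr rfl fun v _ => h1 w v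
              _ = ∑ w, (if e ≤ w then (∑ v, q w v) else 0) :=
                  Finset.sum_congr rfl fun w _ => by split <;> simp
              _ = GB e := rfl
          have hcondB : (f : ℕ) + 1 < b₀ ∧ GB e ≤ δ := ⟨hsB, hG ▸ hc.2⟩
          rw [if_pos hcondB]
          have : (0:ℝ) ≤ if ((e : ℕ) + 1 < a₀ ∧ GA f ≤ δ) then m e f else 0 := by
            split <;> simp [hm0]
          linarith [this]
    · rw [if_neg hc]; exact hrhs0
  -- sum the pointwise bound
  have hsplit : (∑ e : Fin K, ∑ f : Fin K,
      (if ¬(a₀ ≤ (e : ℕ) + 1 ∧ (e : ℕ) + 1 ≤ a₁ ∧ b₀ ≤ (f : ℕ) + 1 ∧ (f : ℕ) + 1 ≤ b₁) ∧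
          (∑ w, ∑ v, (if e ≤ w ∧ f ≤ v then margWV p w v else 0)) ≤ δ
        then ∑ w, ∑ v, p w v e f else 0))
      ≤ (∑ e : Fin K, ∑ f : Fin K, (if ((e : ℕ) + 1 < a₀ ∧ GA f ≤ δ) then m e f else 0))
        + (∑ e : Fin K, ∑ f : Fin K, (if ((f : ℕ) + 1 < b₀ ∧ GB e ≤ δ) then m e f else 0)) := by
    rw [← Finset.sum_add_distrib]
    apply Finset.sum_le_sum; intro e _
    rw [← Finset.sum_add_distrib]
    exact Finset.sum_le_sum fun f _ => hpt e f
  -- Bound SA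
  have hSA : (∑ e : Fin K, ∑ f : Fin K, (if ((e : ℕ) + 1 < a₀ ∧ GA f ≤ δ) then m e f else 0)) ≤ δ := by
    rw [Finset.sum_comm]
    have step1 : ∀ f : Fin K, (∑ e : Fin K, (if ((e : ℕ) + 1 < a₀ ∧ GA f ≤ δ) then m e f else 0))
        ≤ if GA f ≤ δ then (∑ e, m e f) else 0 := by
      intro f
      by_cases hGf : GA f ≤ δ
      · rw [if_pos hGf]
        apply Finset.sum_le_sum; intro e _
        split <;> simp [hm0]
      · rw [if_neg hGf]
        apply le_of_eq
        apply Finset.sum_eq_zero; intro e _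
        rw [if_neg (fun h => hGf h.2)]
    refine le_trans (Finset.sum_le_sum fun f _ => step1 f) ?_
    have hswap : ∀ f : Fin K, (∑ e, m e f) = ∑ v, ∑ w, ∑ e, p w v e f := by
      intro f
      calc (∑ e, ∑ w, ∑ v, p w v e f) = ∑ w, ∑ e, ∑ v, p w v e f := Finset.sum_comm
        _ = ∑ w, ∑ v, ∑ e, p w v e f := Finset.sum_congr rfl fun w _ => Finset.sum_comm
        _ = ∑ v, ∑ w, ∑ e, p w v e f := Finset.sum_comm
    simp only [hswap]
    exact aux_tail_bound δ (le_of_lt hδ0) (fun v f => ∑ w, ∑ e, p w v e f)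
      (fun v => ∑ w, q w v)
      (fun v f => Finset.sum_nonneg fun w _ => Finset.sum_nonneg fun e _ => hp0 w v e f)
      (fun v f hfv => Finset.sum_eq_zero fun w _ => Finset.sum_eq_zero fun e _ =>
        hpz w v e f (fun h => hfv h.2))
      (fun v => le_of_eq (by
        calc (∑ f, ∑ w, ∑ e, p w v e f) = ∑ w, ∑ f, ∑ e, p w v e f := Finset.sum_comm
          _ = ∑ w, ∑ e, ∑ f, p w v e f := Finset.sum_congr rfl fun w _ => Finset.sum_comm
          _ = ∑ w, q w v := Finset.sum_congr rfl fun w _ => (hqsum w v).symm))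
  -- Bound SB
  have hSB : (∑ e : Fin K, ∑ f : Fin K, (if ((f : ℕ) + 1 < b₀ ∧ GB e ≤ δ) then m e f else 0)) ≤ δ := by
    have step1 : ∀ e : Fin K, (∑ f : Fin K, (if ((f : ℕ) + 1 < b₀ ∧ GB e ≤ δ) then m e f else 0))
        ≤ if GB e ≤ δ then (∑ f, m e f) else 0 := by
      intro e
      by_cases hGe : GB e ≤ δ
      · rw [if_pos hGe]
        apply Finset.sum_le_sum; intro f _
        split <;> simp [hm0]
      · rw [if_neg hGe]
        apply le_of_eq
        apply Finset.sum_eq_zero; intro f _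
        rw [if_neg (fun h => hGe h.2)]
    refine le_trans (Finset.sum_le_sum fun e _ => step1 e) ?_
    have hswap : ∀ e : Fin K, (∑ f, m e f) = ∑ w, ∑ v, ∑ f, p w v e f := by
      intro e
      calc (∑ f, ∑ w, ∑ v, p w v e f) = ∑ w, ∑ f, ∑ v, p w v e f := Finset.sum_comm
        _ = ∑ w, ∑ v, ∑ f, p w v e f := Finset.sum_congr rfl fun w _ => Finset.sum_comm
    simp only [hswap]
    exact aux_tail_bound δ (le_of_lt hδ0) (fun w e => ∑ v, ∑ f, p w v e f)
      (fun w => ∑ v, q w v)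
      (fun w e => Finset.sum_nonneg fun v _ => Finset.sum_nonneg fun f _ => hp0 w v e f)
      (fun w e hew => Finset.sum_eq_zero fun v _ => Finset.sum_eq_zero fun f _ =>
        hpz w v e f (fun h => hew h.1))
      (fun w => le_of_eq (by
        calc (∑ e, ∑ v, ∑ f, p w v e f) = ∑ v, ∑ e, ∑ f, p w v e f := Finset.sum_comm
          _ = ∑ v, q w v := Finset.sum_congr rfl fun v _ => (hqsum w v).symm))
  calc _ ≤ _ := hsplit
    _ ≤ δ + δ := add_le_add hSA hSB
    _ = 2 * δ := by ring

end
end
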